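/- Let G be a digraph, C a set of vertices, and S a 1-edge-out component of some vertex u ∈ C within the induced subgraph G[C] that is not a 1-edge-out component of u in G. Then S contains an endpoint of an edge of G incident to C (i.e., an edge with exactly one endpoint in C). -/
import Mathlib


/-- The edges of `E` going from `S` to `C \ S`; these are the outgoing edges of `S`
in the subgraph of `E` induced by the vertex set `C`. -/
def OutEdgesIn {V : Type*} (E : Set (V × V)) (C S : Set V) : Set (V × V) :=
  {e ∈ E | e.1 ∈ S ∧ e.2 ∈ C ∧ e.2 ∉ S}

/-- `S` is a 1-edge-out component of `u` in the subgraph induced by `C`: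
a minimal subset of `C` containing `u` with at most one outgoing edge in `G[C]`. -/
def IsOneEdgeOutIn {V : Type*} (E : Set (V × V)) (C : Set V) (u : V) (S : Set V) : Prop :=
  S ⊆ C ∧ u ∈ S ∧ (OutEdgesIn E C S).Subsingleton ∧
    ∀ S' : Set V, S' ⊂ S → u ∈ S' → ¬ (OutEdgesIn E C S').Subsingleton

theorem stmt6 {V : Type*} (E : Set (V × V)) (C : Set V) (u : V) (S : Set V)
    (h₁ : IsOneEdgeOutIn E C u S)
    (h₂ : ¬ IsOneEdgeOutIn E Set.univ u S) :
    ∃ z ∈ S, ∃ w : V, w ∉ C ∧ ((z, w) ∈ E ∨ (w, z) ∈ E) := by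
  by_contra h
  push_neg at h
  obtain ⟨hSC, huS, hsub, hmin⟩ := h₁
  apply h₂
  refine ⟨Set.subset_univ S, huS, ?_, ?_⟩
  · have heq : OutEdgesIn E Set.univ S = OutEdgesIn E C S := by
      ext e
      simp only [OutEdgesIn, Set.mem_setOf_eq, Set.mem_univ, true_and]
      constructor
      · rintro ⟨heE, he1, he2⟩
        refine ⟨heE, he1, ?_, he2⟩
        by_contra hc
        exact (h e.1 he1 e.2 hc).1 heE
      · rintro ⟨heE, he1, _, he2⟩
        exact ⟨heE, he1, he2⟩
    rw [heq]; exact hsub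
  · intro S' hlt huS' hss
    exact hmin S' hlt huS'
      (hss.anti (fun e he => ⟨he.1, he.2.1, Set.mem_univ _, he.2.2.2⟩))
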